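/- A map ε : X×X∖Δ → P(M) is NOT a Fitch map if and only if there exist colors m, m' ∈ M (not necessarily distinct) and either a 3-subset {a,b,c} ⊆ X with m ∈ ε(c,b), m ∉ ε(a,b), satisfying one of: (1) m ∉ ε(c,a); (2a) m' ∉ ε(a,c) and m' ∈ ε(b,c); (2b) m' ∈ ε(a,c) and m' ∉ ε(b,c); (3) m ≠ m', m' ∉ ε(c,b), m' ∈ ε(a,b); or a 4-subset {a,b,c,d} ⊆ X with m ∈ ε(c,b), m ∉ ε(a,b), m ≠ m', m' ∉ ε(b,d) ∪ ε(c,d), and m' ∈ ε(a,d). -/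

import Mathlib

/-- A finite rooted phylogenetic tree on leaf set `X`, with vertex type `V`.
Vertices are encoded via a parent function; `par root = root`. -/
structure PhyloTree (V X : Type) : Type where
  fin : Finite V
  root : V
  par : V → V
  par_root : par root = root
  reach : ∀ v : V, ∃ n : ℕ, par^[n] v = root
  leaf : X → V
  leaf_inj : Function.Injective leaf
  leaf_isLeaf : ∀ (x : X) (u : V), par u = leaf x → u = leaf x
  leaf_only : ∀ v : V, (∀ u : V, par u = v → u = v) → ∃ x : X, leaf x = v
  root_deg : (∃ x : X, leaf x = root) ∨ 2 ≤ {u : V | par u = root ∧ u ≠ root}.ncard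
  inner_deg : ∀ v : V, v ≠ root → (¬ ∃ x : X, leaf x = v) →
      2 ≤ {u : V | par u = v ∧ u ≠ v}.ncard

namespace PhyloTree

variable {V X : Type}

/-- `T.anc u v` : `u` is an ancestor of `v`, i.e. `u ⪯_T v`. -/
def anc (T : PhyloTree V X) (u v : V) : Prop := ∃ n : ℕ, T.par^[n] v = u

/-- `l` is the last common ancestor of `a` and `b`. -/
def IsLca (T : PhyloTree V X) (l a b : V) : Prop :=
  T.anc l a ∧ T.anc l b ∧ ∀ u : V, T.anc u a → T.anc u b → T.anc u l

/-- The cluster of `v`: the set of leaves below `v`. -/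
def cluster (T : PhyloTree V X) (v : V) : Set X := {x : X | T.anc v (T.leaf x)}

/-- The cluster set `C(T)`. -/
def clusterSet (T : PhyloTree V X) : Set (Set X) := {S : Set X | ∃ v : V, S = T.cluster v}

/-- The edge `(par u, u)` lies on the descending path from `a` down to `b`. -/
def edgeOnDown (T : PhyloTree V X) (a b u : V) : Prop :=
  T.anc a u ∧ u ≠ a ∧ T.anc u b

/-- The edge `(par u, u)` lies on the unique path between `v` and `w`. -/
def edgeOnPath (T : PhyloTree V X) (v w u : V) : Prop :=
  ∃ l : V, T.IsLca l v w ∧ (T.edgeOnDown l v u ∨ T.edgeOnDown l w u)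

/-- `T` displays the rooted triple `ab|c`. -/
def Displays (T : PhyloTree V X) (a b c : X) : Prop :=
  ∃ l3 l2 : V, T.IsLca l2 (T.leaf a) (T.leaf b) ∧
    T.IsLca l3 l2 (T.leaf c) ∧ l3 ≠ l2

end PhyloTree

/-- `(T, lab)` explains `ε` : for distinct leaves `x,y`, `m ∈ ε x y` iff there is an
`m`-edge on the path from `lca(x,y)` down to `y`. -/
def Explains {V X M : Type} (T : PhyloTree V X) (lab : V → Set M)
    (ε : X → X → Set M) : Prop :=
  ∀ x y : X, x ≠ y → ∀ m : M,
    (m ∈ ε x y ↔ ∃ l : V, T.IsLca l (T.leaf x) (T.leaf y) ∧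
      ∃ u : V, T.edgeOnDown l (T.leaf y) u ∧ m ∈ lab u)

/-- `ε` is a Fitch map: it is explained by some edge-labeled phylogenetic tree. -/
def IsFitchMap {X M : Type} (ε : X → X → Set M) : Prop :=
  ∃ (V : Type) (T : PhyloTree V X) (lab : V → Set M), Explains T lab ε

/-- The complementary neighborhood `N_{¬m}[y]`. -/
def Nbr {X M : Type} (ε : X → X → Set M) (m : M) (y : X) : Set X :=
  {x : X | x ≠ y ∧ m ∉ ε x y} ∪ {y}

/-- The collection `N[ε]` of all complementary neighborhoods. -/
def NbrSet {X M : Type} (ε : X → X → Set M) : Set (Set X) :=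
  {N : Set X | ∃ (m : M) (y : X), N = Nbr ε m y}

/-- A set system is hierarchy-like if any two members intersect in `∅` or one of them. -/
def HLike {X : Type} (H : Set (Set X)) : Prop :=
  ∀ P ∈ H, ∀ Q ∈ H, P ∩ Q = P ∨ P ∩ Q = Q ∨ P ∩ Q = ∅

/-- The inequality condition (IC). -/
def IneqCond {X M : Type} (ε : X → X → Set M) : Prop :=
  ∀ (m : M) (y y' : X), y' ∈ Nbr ε m y → (Nbr ε m y').ncard ≤ (Nbr ε m y).ncard



namespace PhyloTree
variable {V X : Type} {T : PhyloTree V X}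

lemma anc_refl (T : PhyloTree V X) (v : V) : T.anc v v := ⟨0, rfl⟩

lemma anc_trans {u v w : V} (h1 : T.anc u v) (h2 : T.anc w u) : T.anc w v := by
  obtain ⟨n, hn⟩ := h1; obtain ⟨k, hk⟩ := h2
  exact ⟨k + n, by rw [Function.iterate_add_apply, hn, hk]⟩

lemma anc_root (T : PhyloTree V X) (v : V) : T.anc T.root v := T.reach v

lemma eq_root_of_cycle {v : V} {j : ℕ} (hj : 0 < j) (h : T.par^[j] v = v) :
    v = T.root := by
  obtain ⟨N, hN⟩ := T.reach v
  have hmul : ∀ q : ℕ, T.par^[j * q] v = v := by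
    intro q
    induction q with
    | zero => simp
    | succ q ih =>
      rw [Nat.mul_succ, Function.iterate_add_apply, h, ih]
  have hmod : T.par^[N % j] v = T.root := by
    have : T.par^[N % j + j * (N / j)] v = T.root := by
      rw [Nat.mod_add_div] at *; exact hN
    rwa [Function.iterate_add_apply, hmul] at this
  have : v = T.par^[j - N % j] T.root := by
    rw [← hmod, ← Function.iterate_add_apply]
    rw [Nat.sub_add_cancel (le_of_lt (Nat.mod_lt _ hj))]
    exact h.symm
  rw [this, Function.iterate_fixed T.par_root]

lemma anc_antisymm {u v : V} (h1 : T.anc u v) (h2 : T.anc v u) : u = v := by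
  obtain ⟨n, hn⟩ := h1; obtain ⟨k, hk⟩ := h2
  rcases Nat.eq_zero_or_pos (n + k) with h0 | hpos
  · have : n = 0 := by omega
    rw [this] at hn; exact hn.symm
  · have hcyc : T.par^[n + k] u = u := by
      rw [Function.iterate_add_apply, hk, hn]
    have hu : u = T.root := eq_root_of_cycle hpos hcyc
    have hcyc' : T.par^[k + n] v = v := by
      rw [Function.iterate_add_apply, hn, hk]
    have hv : v = T.root := eq_root_of_cycle (by omega) hcyc'
    rw [hu, hv]

lemma anc_total {u w v : V} (h1 : T.anc u v) (h2 : T.anc w v) :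
    T.anc u w ∨ T.anc w u := by
  obtain ⟨n, hn⟩ := h1; obtain ⟨k, hk⟩ := h2
  rcases le_total n k with h | h
  · right; exact ⟨k - n, by rw [← hn, ← Function.iterate_add_apply, Nat.sub_add_cancel h, hk]⟩
  · left; exact ⟨n - k, by rw [← hk, ← Function.iterate_add_apply, Nat.sub_add_cancel h, hn]⟩

open scoped Classical in
lemma exists_isLca (T : PhyloTree V X) (a b : V) : ∃ l : V, T.IsLca l a b := by
  classical
  have hex : ∃ n : ℕ, T.anc (T.par^[n] a) b := by
    obtain ⟨N, hN⟩ := T.reach a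
    exact ⟨N, by rw [hN]; exact T.anc_root b⟩
  set n := Nat.find hex with hn
  refine ⟨T.par^[n] a, ⟨n, rfl⟩, Nat.find_spec hex, ?_⟩
  rintro u ⟨k, hk⟩ hub
  rcases le_or_gt n k with h | h
  · exact ⟨k - n, by rw [← Function.iterate_add_apply, Nat.sub_add_cancel h, hk]⟩
  · exfalso
    exact Nat.find_min hex h (by rw [hk]; exact hub)

lemma isLca_unique {l l' a b : V} (h : T.IsLca l a b) (h' : T.IsLca l' a b) : l = l' :=
  anc_antisymm (h'.2.2 l h.1 h.2.1) (h.2.2 l' h'.1 h'.2.1)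

lemma isLca_symm {l a b : V} (h : T.IsLca l a b) : T.IsLca l b a :=
  ⟨h.2.1, h.1, fun u h1 h2 => h.2.2 u h2 h1⟩

end PhyloTree

namespace FitchProof
open PhyloTree

variable {V X M : Type}

/-- the path from `u` down to leaf `y` has no `m`-edge. -/
def Clean (T : PhyloTree V X) (lab : V → Set M) (m : M) (u : V) (y : X) : Prop :=
  ∀ w : V, T.edgeOnDown u (T.leaf y) w → m ∉ lab w

variable {T : PhyloTree V X} {lab : V → Set M} {ε : X → X → Set M} {m : M}

lemma clean_leaf (y : X) : Clean T lab m (T.leaf y) y := by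
  rintro w ⟨h1, h2, h3⟩
  exact absurd (anc_antisymm h3 h1) h2

lemma clean_mono {u u' : V} {y : X} (hu : T.anc u u') (hc : Clean T lab m u y) :
    Clean T lab m u' y := by
  rintro w ⟨h1, h2, h3⟩
  refine hc w ⟨anc_trans h1 hu, ?_, h3⟩
  rintro rfl
  exact h2 (anc_antisymm h1 hu).symm

lemma exists_vm (T : PhyloTree V X) (lab : V → Set M) (m : M) (y : X) :
    ∃ v : V, T.anc v (T.leaf y) ∧ Clean T lab m v y ∧
      ∀ u : V, T.anc u (T.leaf y) → Clean T lab m u y → T.anc v u := by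
  classical
  obtain ⟨N, hN⟩ := T.reach (T.leaf y)
  set P : ℕ → Prop := fun n => Clean T lab m (T.par^[n] (T.leaf y)) y with hPdef
  have hP0 : P 0 := clean_leaf y
  set n := Nat.findGreatest P N with hndef
  refine ⟨T.par^[n] (T.leaf y), ⟨n, rfl⟩, Nat.findGreatest_spec (Nat.zero_le N) hP0, ?_⟩
  rintro u ⟨k, hk⟩ hcu
  rcases le_or_gt k n with h | h
  · exact ⟨n - k, by rw [← hk, ← Function.iterate_add_apply, Nat.sub_add_cancel h]⟩
  · rcases le_or_gt k N with hkN | hNk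
    · exact absurd (show P k by rw [hPdef]; simpa [hk] using hcu)
        (Nat.findGreatest_is_greatest h hkN)
    · have hu : u = T.root := by
        rw [← hk, show k = (k - N) + N by omega, Function.iterate_add_apply, hN,
          Function.iterate_fixed T.par_root]
      have hPN : P N := by
        rw [hPdef]; simp only [hN]; rw [hu] at hcu; exact hcu
      have hNn : N ≤ n := Nat.le_findGreatest (le_refl N) hPN
      refine ⟨0, ?_⟩
      simp only [Function.iterate_zero, id]
      rw [hu, show n = (n - N) + N by omega, Function.iterate_add_apply, hN,
        Function.iterate_fixed T.par_root]

lemma mem_nbr_iff {x y : X} (hxy : x ≠ y) : x ∈ Nbr ε m y ↔ m ∉ ε x y := by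
  simp [Nbr, hxy]

lemma self_mem_nbr {y : X} : y ∈ Nbr ε m y := Or.inr rfl

lemma not_eps_iff_clean (hex : Explains T lab ε) {x y : X} (hxy : x ≠ y) {l : V}
    (hl : T.IsLca l (T.leaf x) (T.leaf y)) :
    m ∉ ε x y ↔ Clean T lab m l y := by
  rw [hex x y hxy m]
  constructor
  · intro h w hw hm
    exact h ⟨l, hl, w, hw, hm⟩
  · rintro h ⟨l', hl', u, hu, hm⟩
    have heq : l' = l := isLca_unique hl' hl
    subst heq
    exact h u hu hm

lemma nbr_eq_cluster (hex : Explains T lab ε) {y : X} {v : V}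
    (hanc : T.anc v (T.leaf y)) (hcl : Clean T lab m v y)
    (hmax : ∀ u : V, T.anc u (T.leaf y) → Clean T lab m u y → T.anc v u) :
    Nbr ε m y = T.cluster v := by
  ext x
  constructor
  · intro hx
    by_cases hxy : x = y
    · subst hxy; exact hanc
    · obtain ⟨l, hl⟩ := T.exists_isLca (T.leaf x) (T.leaf y)
      have hcly : Clean T lab m l y :=
        (not_eps_iff_clean hex hxy hl).mp ((mem_nbr_iff hxy).mp hx)
      exact anc_trans hl.1 (hmax l hl.2.1 hcly)
  · intro hx
    by_cases hxy : x = y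
    · subst hxy; exact self_mem_nbr
    · obtain ⟨l, hl⟩ := T.exists_isLca (T.leaf x) (T.leaf y)
      have hvl : T.anc v l := hl.2.2 v hx hanc
      have hcly : Clean T lab m l y := clean_mono hvl hcl
      exact (mem_nbr_iff hxy).mpr ((not_eps_iff_clean hex hxy hl).mpr hcly)

lemma fitch_hlike (hex : Explains T lab ε) : HLike (NbrSet ε) := by
  rintro P ⟨m1, y1, rfl⟩ Q ⟨m2, y2, rfl⟩
  obtain ⟨v1, h11, h12, h13⟩ := exists_vm T lab m1 y1
  obtain ⟨v2, h21, h22, h23⟩ := exists_vm T lab m2 y2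
  rw [nbr_eq_cluster hex h11 h12 h13, nbr_eq_cluster hex h21 h22 h23]
  by_cases hne : (T.cluster v1 ∩ T.cluster v2).Nonempty
  · obtain ⟨p, hp1, hp2⟩ := hne
    rcases anc_total (hp1 : T.anc v1 (T.leaf p)) (hp2 : T.anc v2 (T.leaf p)) with h | h
    · right; left
      exact Set.inter_eq_right.mpr (fun x hx => anc_trans hx h)
    · left
      exact Set.inter_eq_left.mpr (fun x hx => anc_trans hx h)
  · right; right
    exact Set.not_nonempty_iff_eq_empty.mp hne

lemma incl (hex : Explains T lab ε) {y y' : X} {l : V}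
    (hl : T.IsLca l (T.leaf y') (T.leaf y))
    (hcy : Clean T lab m l y) (hcy' : Clean T lab m l y') :
    Nbr ε m y ⊆ Nbr ε m y' := by
  obtain ⟨v, hv1, hv2, hv3⟩ := exists_vm T lab m y
  obtain ⟨v', hv'1, hv'2, hv'3⟩ := exists_vm T lab m y'
  have hvl : T.anc v l := hv3 l hl.2.1 hcy
  have hvy' : T.anc v (T.leaf y') := anc_trans hl.1 hvl
  have hcvy' : Clean T lab m v y' := by
    rintro w ⟨h1, h2, h3⟩
    rcases anc_total h3 hl.1 with hwl | hlw
    · exact hv2 w ⟨h1, h2, anc_trans hl.2.1 hwl⟩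
    · by_cases hweq : w = l
      · subst hweq
        exact hv2 w ⟨h1, h2, hl.2.1⟩
      · exact hcy' w ⟨hlw, hweq, h3⟩
  have hsub : T.cluster v ⊆ T.cluster v' :=
    fun x hx => anc_trans hx (hv'3 v hvy' hcvy')
  rw [nbr_eq_cluster hex hv1 hv2 hv3, nbr_eq_cluster hex hv'1 hv'2 hv'3]
  exact hsub

lemma nbr_subset_of_mem (hex : Explains T lab ε) {y y' : X}
    (h : y' ∈ Nbr ε m y) : Nbr ε m y' ⊆ Nbr ε m y := by
  by_cases hyy : y' = y
  · subst hyy; exact subset_rfl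
  · obtain ⟨l, hl⟩ := T.exists_isLca (T.leaf y') (T.leaf y)
    have hcly : Clean T lab m l y :=
      (not_eps_iff_clean hex hyy hl).mp ((mem_nbr_iff hyy).mp h)
    by_cases hcly' : Clean T lab m l y'
    · exact incl hex (isLca_symm hl) hcly' hcly
    · obtain ⟨v', hv'1, hv'2, hv'3⟩ := exists_vm T lab m y'
      have hlv' : T.anc l v' := by
        rcases anc_total hv'1 hl.1 with h1 | h1
        · exact absurd (clean_mono h1 hv'2) hcly'
        · exact h1
      have hlne : v' ≠ l := by
        rintro rfl; exact hcly' hv'2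
      intro x hx
      rw [nbr_eq_cluster hex hv'1 hv'2 hv'3] at hx
      by_cases hxy : x = y
      · subst hxy; exact self_mem_nbr
      · obtain ⟨L, hL⟩ := T.exists_isLca (T.leaf x) (T.leaf y)
        have hLv' : T.anc L v' := by
          rcases anc_total hL.1 hx with h1 | h1
          · exact h1
          · exfalso
            have h2 : T.anc v' (T.leaf y) := anc_trans hL.2.1 h1
            have h3 : T.anc v' l := hl.2.2 v' hv'1 h2
            exact hlne (anc_antisymm h3 hlv')
        have hlL : T.anc l L := hL.2.2 l (anc_trans hx hlv') hl.2.1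
        have hcLy : Clean T lab m L y := by
          rintro w ⟨h1, h2, h3⟩
          refine hcly w ⟨anc_trans h1 hlL, ?_, h3⟩
          rintro rfl
          exact h2 (anc_antisymm hlL h1)
        exact (mem_nbr_iff hxy).mpr ((not_eps_iff_clean hex hxy hL).mpr hcLy)

lemma fitch_ic [Fintype X] (hex : Explains T lab ε) : IneqCond ε :=
  fun _ _ _ h => Set.ncard_le_ncard (nbr_subset_of_mem hex h) (Set.toFinite _)

lemma isFitch_hlike_ic {X M : Type} [Fintype X] {ε : X → X → Set M}
    (h : IsFitchMap ε) : HLike (NbrSet ε) ∧ IneqCond ε := by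
  obtain ⟨V, T, lab, hex⟩ := h
  exact ⟨fitch_hlike hex, fitch_ic hex⟩

def Cfg {X M : Type} (ε : X → X → Set M) : Prop :=
  ∃ m m' : M,
    (∃ a b c : X, a ≠ b ∧ a ≠ c ∧ b ≠ c ∧
      m ∈ ε c b ∧ m ∉ ε a b ∧
      (m ∉ ε c a ∨
        (m' ∉ ε a c ∧ m' ∈ ε b c) ∨
        (m' ∈ ε a c ∧ m' ∉ ε b c) ∨
        (m ≠ m' ∧ m' ∉ ε c b ∧ m' ∈ ε a b))) ∨
    (∃ a b c d : X, a ≠ b ∧ a ≠ c ∧ a ≠ d ∧ b ≠ c ∧ b ≠ d ∧ c ≠ d ∧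
      m ∈ ε c b ∧ m ∉ ε a b ∧
      m ≠ m' ∧ m' ∉ ε b d ∧ m' ∉ ε c d ∧ m' ∈ ε a d)

lemma not_mem_nbr {x y : X} (h : x ∉ Nbr ε m y) : x ≠ y ∧ m ∈ ε x y := by
  by_cases hxy : x = y
  · exact absurd (hxy ▸ self_mem_nbr) h
  · refine ⟨hxy, ?_⟩
    by_contra hm
    exact h (Or.inl ⟨hxy, hm⟩)

lemma cfg_of_not_hlike (h : ¬ HLike (NbrSet ε)) : Cfg ε := by
  classical
  simp only [HLike, not_forall] at h
  obtain ⟨P, hP, Q, hQ, hbad⟩ := h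
  push_neg at hbad
  obtain ⟨hnP, hnQ, hnE⟩ := hbad
  obtain ⟨m, b, rfl⟩ := hP
  obtain ⟨m', d, rfl⟩ := hQ
  obtain ⟨q, hqP, hqPQ⟩ := Set.exists_of_ssubset (Set.inter_subset_left.ssubset_of_ne hnP)
  obtain ⟨r, hrQ, hrPQ⟩ := Set.exists_of_ssubset (Set.inter_subset_right.ssubset_of_ne hnQ)
  obtain ⟨p, hpP, hpQ⟩ := hnE
  have hqQ : q ∉ Nbr ε m' d := fun h => hqPQ ⟨hqP, h⟩
  have hrP : r ∉ Nbr ε m b := fun h => hrPQ ⟨h, hrQ⟩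
  obtain ⟨hqd, hq2⟩ := not_mem_nbr hqQ
  obtain ⟨hrb, hr2⟩ := not_mem_nbr hrP
  have hqr : q ≠ r := fun h => hqQ (h ▸ hrQ)
  by_cases hbd : b = d
  · subst hbd
    by_cases hmm : m = m'
    · exfalso
      subst hmm
      exact (mem_nbr_iff hqd).mp hqP hq2
    · refine ⟨m, m', Or.inl ⟨q, b, r, hqd, hqr, Ne.symm hrb, hr2,
        (mem_nbr_iff hqd).mp hqP, Or.inr (Or.inr (Or.inr ⟨hmm,
        (mem_nbr_iff hrb).mp hrQ, hq2⟩))⟩⟩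
  · by_cases hbQ : b ∈ Nbr ε m' d
    · by_cases hdP : d ∈ Nbr ε m b
      · -- II.D
        have hqb : q ≠ b := fun h => hqQ (h ▸ hbQ)
        have hrd : r ≠ d := fun h => hrP (h ▸ hdP)
        by_cases hmm : m = m'
        · subst hmm
          exact ⟨m, m, Or.inl ⟨d, b, r, Ne.symm hbd, Ne.symm hrd, Ne.symm hrb,
            hr2, (mem_nbr_iff (Ne.symm hbd)).mp hdP,
            Or.inl ((mem_nbr_iff hrd).mp hrQ)⟩⟩
        · exact ⟨m, m', Or.inr ⟨q, b, r, d, hqb, hqr, hqd, Ne.symm hrb, hbd, hrd,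
            hr2, (mem_nbr_iff hqb).mp hqP, hmm, (mem_nbr_iff hbd).mp hbQ,
            (mem_nbr_iff hrd).mp hrQ, hq2⟩⟩
      · -- II.B : (q, b, d) opt 2b
        have hqb : q ≠ b := fun h => hqQ (h ▸ hbQ)
        obtain ⟨hdb, hd2⟩ := not_mem_nbr hdP
        exact ⟨m, m', Or.inl ⟨q, b, d, hqb, hqd, hbd, hd2,
          (mem_nbr_iff hqb).mp hqP,
          Or.inr (Or.inr (Or.inl ⟨hq2, (mem_nbr_iff hbd).mp hbQ⟩))⟩⟩
    · by_cases hdP : d ∈ Nbr ε m b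
      · -- II.C : (r, d, b) colors (m', m) opt 2b
        have hrd : r ≠ d := fun h => hrP (h ▸ hdP)
        obtain ⟨_, hb2⟩ := not_mem_nbr hbQ
        exact ⟨m', m, Or.inl ⟨r, d, b, hrd, hrb, Ne.symm hbd, hb2,
          (mem_nbr_iff hrd).mp hrQ,
          Or.inr (Or.inr (Or.inl ⟨hr2, (mem_nbr_iff (Ne.symm hbd)).mp hdP⟩))⟩⟩
      · -- II.A : (p, b, d) opt 2a
        have hpb : p ≠ b := fun h => hbQ (h ▸ hpQ)
        have hpd : p ≠ d := fun h => hdP (h ▸ hpP)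
        obtain ⟨_, hd2⟩ := not_mem_nbr hdP
        obtain ⟨_, hb2⟩ := not_mem_nbr hbQ
        exact ⟨m, m', Or.inl ⟨p, b, d, hpb, hpd, hbd, hd2,
          (mem_nbr_iff hpb).mp hpP,
          Or.inr (Or.inl ⟨(mem_nbr_iff hpd).mp hpQ, hb2⟩)⟩⟩

lemma cfg_of_not_ic [Fintype X] (hl : HLike (NbrSet ε)) (hic : ¬ IneqCond ε) :
    Cfg ε := by
  simp only [IneqCond, not_forall, not_le] at hic
  obtain ⟨m, y, y', hmem, hlt⟩ := hic
  have hyy : y' ≠ y := by rintro rfl; exact lt_irrefl _ hlt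
  have hcmp := hl (Nbr ε m y') ⟨m, y', rfl⟩ (Nbr ε m y) ⟨m, y, rfl⟩
  have hy'both : y' ∈ Nbr ε m y' ∩ Nbr ε m y := ⟨self_mem_nbr, hmem⟩
  rcases hcmp with h | h | h
  · -- Nbr m y' ⊆ Nbr m y : contradicts cardinality
    exfalso
    have := Set.ncard_le_ncard (Set.inter_eq_left.mp h) (Set.toFinite _)
    omega
  · -- Nbr m y ⊆ Nbr m y'
    have hsub : Nbr ε m y ⊆ Nbr ε m y' := Set.inter_eq_right.mp h
    have hne : Nbr ε m y ≠ Nbr ε m y' := by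
      intro he; rw [he] at hlt; exact lt_irrefl _ hlt
    obtain ⟨c, hc1, hc2⟩ := Set.exists_of_ssubset (hsub.ssubset_of_ne hne)
    obtain ⟨hcb, hc3⟩ := not_mem_nbr hc2
    have hca : c ≠ y' := fun h => hc2 (h ▸ hmem)
    exact ⟨m, m, Or.inl ⟨y', y, c, hyy, Ne.symm hca, Ne.symm hcb, hc3,
      (mem_nbr_iff hyy).mp hmem, Or.inl ((mem_nbr_iff hca).mp hc1)⟩⟩
  · exact absurd (h ▸ hy'both) (Set.notMem_empty y')

lemma not_hlike_ic_of_cfg [Fintype X] (hc : Cfg ε) :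
    ¬ (HLike (NbrSet ε) ∧ IneqCond ε) := by
  rintro ⟨hl, hic⟩
  obtain ⟨m, m', hc⟩ := hc
  rcases hc with ⟨a, b, c, hab, hac, hbc, h1, h2, hopt⟩ |
    ⟨a, b, c, d, hab, hac, had, hbc, hbd, hcd, h1, h2, hmm, h3, h4, h5⟩
  · have haP : a ∈ Nbr ε m b := (mem_nbr_iff hab).mpr h2
    have hcP : c ∉ Nbr ε m b := fun h => (mem_nbr_iff (Ne.symm hbc)).mp h h1
    rcases hopt with h3 | ⟨h3, h4⟩ | ⟨h3, h4⟩ | ⟨hmm, h3, h4⟩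
    · -- needs IC
      have hcQ : c ∈ Nbr ε m a := (mem_nbr_iff (Ne.symm hac)).mpr h3
      rcases hl (Nbr ε m b) ⟨m, b, rfl⟩ (Nbr ε m a) ⟨m, a, rfl⟩ with h | h | h
      · have hsub : Nbr ε m b ⊆ Nbr ε m a := Set.inter_eq_left.mp h
        have hbQ : b ∈ Nbr ε m a := hsub self_mem_nbr
        have e1 := hic m a b hbQ
        have e2 := hic m b a haP
        have : Nbr ε m b = Nbr ε m a :=
          Set.eq_of_subset_of_ncard_le hsub e2 (Set.toFinite _)
        exact hcP (this ▸ hcQ)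
      · exact hcP (Set.inter_eq_right.mp h hcQ)
      · exact absurd (h ▸ (⟨haP, self_mem_nbr⟩ : a ∈ Nbr ε m b ∩ Nbr ε m a))
          (Set.notMem_empty a)
    · have haQ : a ∈ Nbr ε m' c := (mem_nbr_iff hac).mpr h3
      have hbQ : b ∉ Nbr ε m' c := fun h => (mem_nbr_iff hbc).mp h h4
      rcases hl (Nbr ε m b) ⟨m, b, rfl⟩ (Nbr ε m' c) ⟨m', c, rfl⟩ with h | h | h
      · exact hbQ (Set.inter_eq_left.mp h self_mem_nbr)
      · exact hcP (Set.inter_eq_right.mp h self_mem_nbr)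
      · exact absurd (h ▸ (⟨haP, haQ⟩ : a ∈ Nbr ε m b ∩ Nbr ε m' c))
          (Set.notMem_empty a)
    · have haQ : a ∉ Nbr ε m' c := fun h => (mem_nbr_iff hac).mp h h3
      have hbQ : b ∈ Nbr ε m' c := (mem_nbr_iff hbc).mpr h4
      rcases hl (Nbr ε m b) ⟨m, b, rfl⟩ (Nbr ε m' c) ⟨m', c, rfl⟩ with h | h | h
      · exact haQ (Set.inter_eq_left.mp h haP)
      · exact hcP (Set.inter_eq_right.mp h self_mem_nbr)
      · exact absurd (h ▸ (⟨self_mem_nbr, hbQ⟩ : b ∈ Nbr ε m b ∩ Nbr ε m' c))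
          (Set.notMem_empty b)
    · have haQ : a ∉ Nbr ε m' b := fun h => (mem_nbr_iff hab).mp h h4
      have hcQ : c ∈ Nbr ε m' b := (mem_nbr_iff (Ne.symm hbc)).mpr h3
      rcases hl (Nbr ε m b) ⟨m, b, rfl⟩ (Nbr ε m' b) ⟨m', b, rfl⟩ with h | h | h
      · exact haQ (Set.inter_eq_left.mp h haP)
      · exact hcP (Set.inter_eq_right.mp h hcQ)
      · exact absurd (h ▸ (⟨self_mem_nbr, self_mem_nbr⟩ : b ∈ Nbr ε m b ∩ Nbr ε m' b))
          (Set.notMem_empty b)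
  · have haP : a ∈ Nbr ε m b := (mem_nbr_iff hab).mpr h2
    have hcP : c ∉ Nbr ε m b := fun h => (mem_nbr_iff (Ne.symm hbc)).mp h h1
    have haQ : a ∉ Nbr ε m' d := fun h => (mem_nbr_iff had).mp h h5
    have hbQ : b ∈ Nbr ε m' d := (mem_nbr_iff hbd).mpr h3
    have hcQ : c ∈ Nbr ε m' d := (mem_nbr_iff hcd).mpr h4
    rcases hl (Nbr ε m b) ⟨m, b, rfl⟩ (Nbr ε m' d) ⟨m', d, rfl⟩ with h | h | h
    · exact haQ (Set.inter_eq_left.mp h haP)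
    · exact hcP (Set.inter_eq_right.mp h hcQ)
    · exact absurd (h ▸ (⟨self_mem_nbr, hbQ⟩ : b ∈ Nbr ε m b ∩ Nbr ε m' d))
        (Set.notMem_empty b)

def Hset (ε : X → X → Set M) : Set (Set X) :=
  NbrSet ε ∪ {S : Set X | ∃ x, S = {x}} ∪ {Set.univ}

lemma nbr_mem_Hset (ε : X → X → Set M) (m : M) (y : X) : Nbr ε m y ∈ Hset ε :=
  Or.inl (Or.inl ⟨m, y, rfl⟩)

lemma singleton_mem_Hset (ε : X → X → Set M) (x : X) : ({x} : Set X) ∈ Hset ε :=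
  Or.inl (Or.inr ⟨x, rfl⟩)

lemma univ_mem_Hset (ε : X → X → Set M) : (Set.univ : Set X) ∈ Hset ε :=
  Or.inr rfl

lemma Hset_nonempty [Nonempty X] (ε : X → X → Set M) {S : Set X} (hS : S ∈ Hset ε) :
    S.Nonempty := by
  rcases hS with (⟨m, y, rfl⟩ | ⟨x, rfl⟩) | h
  · exact ⟨y, self_mem_nbr⟩
  · exact ⟨x, rfl⟩
  · rw [h]; exact Set.univ_nonempty

lemma Hset_comparable {ε : X → X → Set M} (hl : HLike (NbrSet ε)) {S Q : Set X}
    (hS : S ∈ Hset ε) (hQ : Q ∈ Hset ε) (hne : (S ∩ Q).Nonempty) :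
    S ⊆ Q ∨ Q ⊆ S := by
  obtain ⟨z, hz1, hz2⟩ := hne
  rcases hS with (hS | ⟨x, rfl⟩) | hS
  · rcases hQ with (hQ | ⟨x, rfl⟩) | hQ
    · rcases hl S hS Q hQ with h | h | h
      · exact Or.inl (Set.inter_eq_left.mp h)
      · exact Or.inr (Set.inter_eq_right.mp h)
      · exact absurd (h ▸ (⟨hz1, hz2⟩ : z ∈ S ∩ Q)) (Set.notMem_empty z)
    · right
      rw [Set.mem_singleton_iff] at hz2
      exact Set.singleton_subset_iff.mpr (hz2 ▸ hz1)
    · left; rw [hQ]; exact Set.subset_univ S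
  · left
    rw [Set.mem_singleton_iff] at hz1
    exact Set.singleton_subset_iff.mpr (hz1 ▸ hz2)
  · right; rw [hS]; exact Set.subset_univ Q

lemma exists_min_mem [Fintype X] (F : Set (Set X)) (hF : F.Nonempty)
    (hchain : ∀ P ∈ F, ∀ Q ∈ F, P ⊆ Q ∨ Q ⊆ P) : ∃ T ∈ F, ∀ U ∈ F, T ⊆ U := by
  obtain ⟨T, hT, hmin⟩ := Set.exists_min_image F Set.ncard (Set.toFinite F) hF
  refine ⟨T, hT, fun U hU => ?_⟩
  rcases hchain T hT U hU with h | h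
  · exact h
  · exact (Set.eq_of_subset_of_ncard_le h (hmin U hU) (Set.toFinite _)).symm.subset

lemma exists_max_mem [Fintype X] (F : Set (Set X)) (hF : F.Nonempty)
    (hchain : ∀ P ∈ F, ∀ Q ∈ F, P ⊆ Q ∨ Q ⊆ P) : ∃ T ∈ F, ∀ U ∈ F, U ⊆ T := by
  obtain ⟨T, hT, hmax⟩ := Set.exists_max_image F Set.ncard (Set.toFinite F) hF
  refine ⟨T, hT, fun U hU => ?_⟩
  rcases hchain T hT U hU with h | h
  · exact (Set.eq_of_subset_of_ncard_le h (hmax U hU) (Set.toFinite _)).symm.subset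
  · exact h

lemma isFitch_of_hlike_ic [Fintype X] [Nonempty X] {ε : X → X → Set M}
    (hl : HLike (NbrSet ε)) (ic : IneqCond ε) : IsFitchMap ε := by
  classical
  set Vt := {S : Set X // S ∈ Hset ε} with hVt
  have hfin : Finite Vt := by infer_instance
  -- parent function
  have hpar_ex : ∀ v : Vt, ∃ w : Vt, (v.1 = Set.univ → w = v) ∧
      (v.1 ≠ Set.univ → v.1 ⊂ w.1 ∧ ∀ U ∈ Hset ε, v.1 ⊂ U → w.1 ⊆ U) := by
    intro v
    by_cases hv : v.1 = Set.univ
    · exact ⟨v, fun _ => rfl, fun h => absurd hv h⟩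
    · have hFne : ({U | U ∈ Hset ε ∧ v.1 ⊂ U}).Nonempty :=
        ⟨Set.univ, univ_mem_Hset ε, (Set.subset_univ v.1).ssubset_of_ne hv⟩
      have hchain : ∀ P ∈ {U | U ∈ Hset ε ∧ v.1 ⊂ U}, ∀ Q ∈ {U | U ∈ Hset ε ∧ v.1 ⊂ U},
          P ⊆ Q ∨ Q ⊆ P := by
        intro P hP Q hQ
        obtain ⟨z, hz⟩ := Hset_nonempty ε v.2
        exact Hset_comparable hl hP.1 hQ.1 ⟨z, hP.2.subset hz, hQ.2.subset hz⟩
      obtain ⟨T2, hT2, hmin⟩ := exists_min_mem _ hFne hchain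
      exact ⟨⟨T2, hT2.1⟩, fun h => absurd h hv,
        fun _ => ⟨hT2.2, fun U hU hvU => hmin U ⟨hU, hvU⟩⟩⟩
  choose par hpar1 hpar2 using hpar_ex
  set rt : Vt := ⟨Set.univ, univ_mem_Hset ε⟩ with hrt
  have par_sub : ∀ v : Vt, v.1 ⊆ (par v).1 := by
    intro v
    by_cases hv : v.1 = Set.univ
    · rw [hpar1 v hv]
    · exact ((hpar2 v hv).1).subset
  have par_card : ∀ v : Vt, v.1 ≠ Set.univ → v.1.ncard < (par v).1.ncard :=
    fun v hv => Set.ncard_lt_ncard (hpar2 v hv).1 (Set.toFinite _)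
  have hcardle : ∀ v : Vt, v.1.ncard ≤ Fintype.card X := by
    intro v
    have := Set.ncard_le_ncard (Set.subset_univ v.1) (Set.toFinite _)
    rwa [Set.ncard_univ, Nat.card_eq_fintype_card] at this
  have hreach : ∀ v : Vt, ∃ n : ℕ, par^[n] v = rt := by
    have key : ∀ (k : ℕ) (v : Vt), Fintype.card X - v.1.ncard ≤ k →
        ∃ n : ℕ, par^[n] v = rt := by
      intro k
      induction k with
      | zero =>
        intro v hv
        have h1 : (Set.univ : Set X).ncard ≤ v.1.ncard := by
          rw [Set.ncard_univ, Nat.card_eq_fintype_card]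
          have := hcardle v; omega
        exact ⟨0, Subtype.ext (Set.eq_of_subset_of_ncard_le (Set.subset_univ _) h1
          (Set.toFinite _))⟩
      | succ k ih =>
        intro v hv
        by_cases hveq : v.1 = Set.univ
        · exact ⟨0, Subtype.ext hveq⟩
        · have hlt := par_card v hveq
          have hle := hcardle (par v)
          obtain ⟨n, hn⟩ := ih (par v) (by omega)
          exact ⟨n + 1, by rw [Function.iterate_succ_apply, hn]⟩
    exact fun v => key (Fintype.card X) v (by omega)
  set lf : X → Vt := fun x => ⟨{x}, singleton_mem_Hset ε x⟩ with hlf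
  -- children
  have hchild : ∀ (v : Vt) (x : X), x ∈ v.1 → v.1 ≠ {x} →
      ∃ u : Vt, par u = v ∧ u ≠ v ∧ x ∈ u.1 := by
    intro v x hx hne
    have hFne : ({U | U ∈ Hset ε ∧ x ∈ U ∧ U ⊂ v.1}).Nonempty :=
      ⟨{x}, singleton_mem_Hset ε x, rfl,
        (Set.singleton_subset_iff.mpr hx).ssubset_of_ne (fun h => hne h.symm)⟩
    have hchain : ∀ P ∈ {U | U ∈ Hset ε ∧ x ∈ U ∧ U ⊂ v.1},
        ∀ Q ∈ {U | U ∈ Hset ε ∧ x ∈ U ∧ U ⊂ v.1}, P ⊆ Q ∨ Q ⊆ P :=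
      fun P hP Q hQ => Hset_comparable hl hP.1 hQ.1 ⟨x, hP.2.1, hQ.2.1⟩
    obtain ⟨U, hU, hmax⟩ := exists_max_mem _ hFne hchain
    have hUuniv : U ≠ Set.univ := fun h => (hU.2.2.not_subset) (h ▸ Set.subset_univ v.1)
    have hp2 := hpar2 ⟨U, hU.1⟩ hUuniv
    have hsub : (par ⟨U, hU.1⟩).1 ⊆ v.1 := hp2.2 v.1 v.2 hU.2.2
    by_cases heq : (par ⟨U, hU.1⟩).1 = v.1
    · exact ⟨⟨U, hU.1⟩, Subtype.ext heq,
        fun h => hU.2.2.ne (congrArg Subtype.val h), hU.2.1⟩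
    · exfalso
      have hss : (par ⟨U, hU.1⟩).1 ⊂ v.1 := hsub.ssubset_of_ne heq
      have hxp : x ∈ (par ⟨U, hU.1⟩).1 := par_sub ⟨U, hU.1⟩ hU.2.1
      exact hp2.1.not_subset (hmax (par ⟨U, hU.1⟩).1 ⟨(par ⟨U, hU.1⟩).2, hxp, hss⟩)
  have hdeg : ∀ v : Vt, (∀ x : X, v.1 ≠ {x}) →
      2 ≤ {u : Vt | par u = v ∧ u ≠ v}.ncard := by
    intro v hns
    obtain ⟨x1, hx1⟩ := Hset_nonempty ε v.2
    obtain ⟨u1, hu1p, hu1ne, hxu1⟩ := hchild v x1 hx1 (hns x1)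
    have hu1u : u1.1 ≠ Set.univ := fun h => hu1ne ((hpar1 u1 h).symm.trans hu1p)
    have hu1ss : u1.1 ⊂ v.1 := by
      have := (hpar2 u1 hu1u).1
      rwa [hu1p] at this
    obtain ⟨x2, hx2v, hx2u⟩ := Set.exists_of_ssubset hu1ss
    obtain ⟨u2, hu2p, hu2ne, hxu2⟩ := hchild v x2 hx2v (hns x2)
    have hne12 : u1 ≠ u2 := fun h => hx2u (h ▸ hxu2)
    exact (Set.one_lt_ncard_iff (Set.toFinite _)).mpr
      ⟨u1, u2, ⟨hu1p, hu1ne⟩, ⟨hu2p, hu2ne⟩, hne12⟩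
  -- build the tree
  have hT : ∃ T : PhyloTree Vt X, T.par = par ∧ T.leaf = lf ∧ T.root = rt := by
    refine ⟨⟨hfin, rt, par, hpar1 rt rfl, hreach, lf, ?_, ?_, ?_, ?_, ?_⟩, rfl, rfl, rfl⟩
    · -- leaf_inj
      intro x y h
      have := congrArg Subtype.val h
      simpa [hlf] using this
    · -- leaf_isLeaf
      intro x u h
      by_cases hu : u.1 = Set.univ
      · exact (hpar1 u hu).symm.trans h
      · exfalso
        have := (hpar2 u hu).1
        rw [h] at this
        exact (Set.nonempty_iff_ne_empty.mp (Hset_nonempty ε u.2))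
          (Set.ssubset_singleton_iff.mp this)
    · -- leaf_only
      intro v hv
      obtain ⟨x, hx⟩ := Hset_nonempty ε v.2
      by_cases h : v.1 = {x}
      · exact ⟨x, Subtype.ext h.symm⟩
      · obtain ⟨u, h1, h2, _⟩ := hchild v x hx h
        exact absurd (hv u h1) h2
    · -- root_deg
      by_cases h : ∃ x : X, (Set.univ : Set X) = {x}
      · obtain ⟨x, hx⟩ := h
        exact Or.inl ⟨x, Subtype.ext hx.symm⟩
      · push_neg at h
        exact Or.inr (hdeg rt h)
    · -- inner_deg
      intro v _ hnleaf
      refine hdeg v (fun x h => hnleaf ⟨x, Subtype.ext h.symm⟩)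
  obtain ⟨T, hTpar, hTleaf, hTroot⟩ := hT
  -- anc characterization
  have anc_sub : ∀ u v : Vt, T.anc u v ↔ v.1 ⊆ u.1 := by
    have mono : ∀ (n : ℕ) (v : Vt), v.1 ⊆ (par^[n] v).1 := by
      intro n
      induction n with
      | zero => intro v; rfl
      | succ n ih =>
        intro v
        rw [Function.iterate_succ_apply']
        exact (ih v).trans (par_sub _)
    have key : ∀ (k : ℕ) (v u : Vt), v.1 ⊆ u.1 → u.1.ncard - v.1.ncard ≤ k →
        ∃ n : ℕ, par^[n] v = u := by
      intro k
      induction k with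
      | zero =>
        intro v u hsub hc
        have h1 : u.1.ncard ≤ v.1.ncard := by omega
        exact ⟨0, Subtype.ext (Set.eq_of_subset_of_ncard_le hsub h1 (Set.toFinite _))⟩
      | succ k ih =>
        intro v u hsub hc
        by_cases heq : v.1 = u.1
        · exact ⟨0, Subtype.ext heq⟩
        · have hss : v.1 ⊂ u.1 := hsub.ssubset_of_ne heq
          have hvuniv : v.1 ≠ Set.univ := by
            intro h
            exact hss.not_subset (h ▸ Set.subset_univ u.1)
          have hps : (par v).1 ⊆ u.1 := (hpar2 v hvuniv).2 u.1 u.2 hss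
          have hlt := par_card v hvuniv
          have hle := Set.ncard_le_ncard hps (Set.toFinite _)
          obtain ⟨n, hn⟩ := ih (par v) u hps (by omega)
          exact ⟨n + 1, by rw [Function.iterate_succ_apply, hn]⟩
    intro u v
    constructor
    · rintro ⟨n, hn⟩
      rw [hTpar] at hn
      exact hn ▸ mono n v
    · intro h
      obtain ⟨n, hn⟩ := key (Fintype.card X) v u h (by have := hcardle u; omega)
      exact ⟨n, by rw [hTpar]; exact hn⟩
  -- lca
  have hlca : ∀ x y : X, ∃ L : Vt, T.IsLca L (lf x) (lf y) ∧ x ∈ L.1 ∧ y ∈ L.1 ∧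
      (∀ U ∈ Hset ε, x ∈ U → y ∈ U → L.1 ⊆ U) := by
    intro x y
    have hFne : ({U | U ∈ Hset ε ∧ x ∈ U ∧ y ∈ U}).Nonempty :=
      ⟨Set.univ, univ_mem_Hset ε, trivial, trivial⟩
    have hchain : ∀ P ∈ {U | U ∈ Hset ε ∧ x ∈ U ∧ y ∈ U},
        ∀ Q ∈ {U | U ∈ Hset ε ∧ x ∈ U ∧ y ∈ U}, P ⊆ Q ∨ Q ⊆ P :=
      fun P hP Q hQ => Hset_comparable hl hP.1 hQ.1 ⟨x, hP.2.1, hQ.2.1⟩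
    obtain ⟨L, hL, hmin⟩ := exists_min_mem _ hFne hchain
    refine ⟨⟨L, hL.1⟩, ⟨?_, ?_, ?_⟩, hL.2.1, hL.2.2, fun U hU hx hy => hmin U ⟨hU, hx, hy⟩⟩
    · exact (anc_sub _ _).mpr (Set.singleton_subset_iff.mpr hL.2.1)
    · exact (anc_sub _ _).mpr (Set.singleton_subset_iff.mpr hL.2.2)
    · intro u h1 h2
      have hx : x ∈ u.1 := Set.singleton_subset_iff.mp ((anc_sub _ _).mp h1)
      have hy : y ∈ u.1 := Set.singleton_subset_iff.mp ((anc_sub _ _).mp h2)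
      exact (anc_sub _ _).mpr (hmin u.1 ⟨u.2, hx, hy⟩)
  refine ⟨Vt, T, fun C => {m | ∃ z, C.1 = Nbr ε m z}, ?_⟩
  intro x y hxy m
  rw [hTleaf]
  obtain ⟨L, hLlca, hxL, hyL, hLmin⟩ := hlca x y
  constructor
  · intro hm
    refine ⟨L, hLlca, ⟨Nbr ε m y, nbr_mem_Hset ε m y⟩, ⟨?_, ?_, ?_⟩, ⟨y, rfl⟩⟩
    · apply (anc_sub _ _).mpr
      rcases Hset_comparable hl (nbr_mem_Hset ε m y) L.2 ⟨y, self_mem_nbr, hyL⟩ with h | h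
      · exact h
      · exact absurd ((mem_nbr_iff hxy).mp (h hxL)) (fun hh => hh hm)
    · intro he
      rw [← congrArg Subtype.val he] at hxL
      exact (mem_nbr_iff hxy).mp hxL hm
    · exact (anc_sub _ _).mpr (Set.singleton_subset_iff.mpr self_mem_nbr)
  · rintro ⟨l, hl', u, ⟨ha1, ha2, ha3⟩, ⟨z, hz⟩⟩
    have hleq : l = L := by
      have h1 : T.anc L l := hl'.2.2 L hLlca.1 hLlca.2.1
      have h2 : T.anc l L := hLlca.2.2 l hl'.1 hl'.2.1
      exact Subtype.ext (subset_antisymm ((anc_sub _ _).mp h1) ((anc_sub _ _).mp h2))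
    rw [hleq] at ha1 ha2
    have huL : u.1 ⊆ L.1 := (anc_sub L u).mp ha1
    have huLne : u.1 ≠ L.1 := fun h => ha2 (Subtype.ext h)
    have hyu : y ∈ u.1 := Set.singleton_subset_iff.mp ((anc_sub _ _).mp ha3)
    have hyz : y ∈ Nbr ε m z := hz ▸ hyu
    have hcard := ic m z y hyz
    have hsub : Nbr ε m y ⊆ u.1 := by
      rcases Hset_comparable hl (nbr_mem_Hset ε m y) u.2 ⟨y, self_mem_nbr, hyu⟩ with h | h
      · exact h
      · have : u.1 = Nbr ε m y := by
          apply Set.eq_of_subset_of_ncard_le h _ (Set.toFinite _)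
          rw [hz]
          exact hcard
        exact this.symm.subset
    have hxN : x ∉ Nbr ε m y := by
      intro hxN
      have hLN : L.1 ⊆ Nbr ε m y := hLmin (Nbr ε m y) (nbr_mem_Hset ε m y) hxN self_mem_nbr
      exact huLne (subset_antisymm huL (hLN.trans hsub))
    exact (not_mem_nbr hxN).2

end FitchProof

/-- characterization of non-Fitch maps via forbidden configurations. -/
theorem not_fitch_iff {X M : Type} [Fintype X] [Fintype M] [Nonempty X] [Nonempty M]
    (ε : X → X → Set M) :
    ¬ IsFitchMap ε ↔
      ∃ m m' : M,
        (∃ a b c : X, a ≠ b ∧ a ≠ c ∧ b ≠ c ∧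
          m ∈ ε c b ∧ m ∉ ε a b ∧
          (m ∉ ε c a ∨
            (m' ∉ ε a c ∧ m' ∈ ε b c) ∨
            (m' ∈ ε a c ∧ m' ∉ ε b c) ∨
            (m ≠ m' ∧ m' ∉ ε c b ∧ m' ∈ ε a b))) ∨
        (∃ a b c d : X, a ≠ b ∧ a ≠ c ∧ a ≠ d ∧ b ≠ c ∧ b ≠ d ∧ c ≠ d ∧
          m ∈ ε c b ∧ m ∉ ε a b ∧
          m ≠ m' ∧ m' ∉ ε b d ∧ m' ∉ ε c d ∧ m' ∈ ε a d) := by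
  show ¬ IsFitchMap ε ↔ FitchProof.Cfg ε
  constructor
  · intro hnf
    by_contra hcfg
    refine hnf (FitchProof.isFitch_of_hlike_ic ?_ ?_)
    · by_contra hhl
      exact hcfg (FitchProof.cfg_of_not_hlike hhl)
    · by_contra hic
      have hhl : HLike (NbrSet ε) := by
        by_contra hhl
        exact hcfg (FitchProof.cfg_of_not_hlike hhl)
      exact hcfg (FitchProof.cfg_of_not_ic hhl hic)
  · intro hcfg hf
    exact FitchProof.not_hlike_ic_of_cfg hcfg (FitchProof.isFitch_hlike_ic hf)
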